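/- Let H, Z be Hermitian n×n matrices and t > 0. Define the time-averaged operator Z̄ = (1/t) ∫₀ᵗ e^{isH} Z e^{-isH} ds. Then ‖Z̄ − Z‖ ≤ (t/2) · ‖[H, Z]‖. -/

import Mathlib

open NormedSpace

lemma stmt_3_aux {𝔸 : Type*} [NormedRing 𝔸] [StarRing 𝔸] [CStarRing 𝔸]
    [NormedAlgebra ℂ 𝔸] [CompleteSpace 𝔸] [StarModule ℂ 𝔸]
    (H Z : 𝔸) (hH : IsSelfAdjoint H) (t : ℝ) (ht : 0 < t) :
    ‖(t⁻¹ : ℝ) • (∫ s in (0:ℝ)..t,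
        exp ((Complex.I * s) • H) * Z * exp ((-(Complex.I * s)) • H)) - Z‖ ≤
      (t / 2) * ‖H * Z - Z * H‖ := by
  set A : 𝔸 := Complex.I • H with hA
  have hexp : (exp : 𝔸 → 𝔸) = exp := rfl
  have hAstar : star A = -A := by
    rw [hA, star_smul, Complex.star_def, Complex.conj_I, hH.star_eq, neg_smul]
  have hRC : ∀ (s : ℝ) (x : 𝔸), s • x = ((s : ℂ)) • x := fun s x => by
    rw [show ((s : ℂ)) = algebraMap ℝ ℂ s from rfl, algebraMap_smul]
  have hskew : ∀ s : ℝ, (s • A) ∈ skewAdjoint 𝔸 := by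
    intro s
    rw [skewAdjoint.mem_iff, hRC, star_smul, hAstar, Complex.star_def, smul_neg, ← neg_smul]
    norm_num
  have hmem : ∀ s : ℝ, exp (s • A) ∈ unitary 𝔸 := fun s =>
    letI : NormedAlgebra ℚ 𝔸 := NormedAlgebra.restrictScalars ℚ ℂ 𝔸
    exp_mem_unitary_of_mem_skewAdjoint (hskew s)
  have hconj : ∀ (s : ℝ) (C : 𝔸), ‖exp (s • A) * C * exp ((-s) • A)‖ = ‖C‖ := by
    intro s C
    rw [CStarRing.norm_mul_mem_unitary _ (hmem (-s)), CStarRing.norm_mem_unitary_mul _ (hmem s)]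
  have hcast : ∀ s : ℝ, (Complex.I * (s : ℂ)) • H = s • A := by
    intro s
    rw [hA, hRC, smul_smul, mul_comm]
  have hcast' : ∀ s : ℝ, (-(Complex.I * (s : ℂ))) • H = (-s) • A := by
    intro s
    have := hcast (-s)
    push_cast at this
    rw [← this]; ring_nf
  set f : ℝ → 𝔸 := fun s => exp (s • A) * Z * exp ((-s) • A) with hf
  set M : ℝ := ‖H * Z - Z * H‖ with hM
  have hcommnorm : ‖A * Z - Z * A‖ = M := by
    rw [hA, smul_mul_assoc, mul_smul_comm, ← smul_sub, norm_smul, Complex.norm_I, one_mul]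
  have hder : ∀ s : ℝ, HasDerivAt f (exp (s • A) * (A * Z - Z * A) * exp ((-s) • A)) s := by
    intro s
    have h1 : HasDerivAt (fun u : ℝ => exp (u • A)) (exp (s • A) * A) s := by
      rw [← hexp]; exact hasDerivAt_exp_smul_const (𝕂 := ℝ) A s
    have h2 : HasDerivAt (fun u : ℝ => exp ((-u) • A)) (-(exp ((-s) • A) * A)) s := by
      have h3 : HasDerivAt (fun u : ℝ => exp (u • A)) (exp ((-s) • A) * A) (-s) := by
        rw [← hexp]; exact hasDerivAt_exp_smul_const (𝕂 := ℝ) A (-s)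
      simpa [Function.comp_def] using h3.scomp s (hasDerivAt_neg s)
    have := (h1.mul_const Z).mul h2
    convert this using 1
    · rfl
    have hc : A * exp ((-s) • A) = exp ((-s) • A) * A := by
      rw [← hexp]
      exact (((Commute.refl A).smul_right (-s)).exp_right).eq
    have hc' : exp (s • A) * A = A * exp (s • A) := by
      rw [← hexp]
      exact (((Commute.refl A).smul_right s).exp_right).eq.symm
    calc exp (s • A) * (A * Z - Z * A) * exp ((-s) • A)
        = exp (s • A) * A * Z * exp ((-s) • A)
          - exp (s • A) * Z * (A * exp ((-s) • A)) := by
          simp only [mul_sub, sub_mul, mul_assoc]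
      _ = _ := by rw [hc]; simp only [mul_neg, mul_assoc, sub_eq_add_neg]
  have hf0 : f 0 = Z := by
    simp only [hf, neg_zero, zero_smul, exp_zero, one_mul, mul_one]
  have hcont : Continuous f := by
    have : Differentiable ℝ f := fun s => (hder s).differentiableAt
    exact this.continuous
  have hbound : ∀ s ∈ Set.Icc (0:ℝ) t, ‖f s - Z‖ ≤ M * s := by
    intro s hs
    have := norm_image_sub_le_of_norm_deriv_le_segment'
      (f := f) (f' := fun u => exp (u • A) * (A * Z - Z * A) * exp ((-u) • A))
      (a := 0) (b := t) (C := M)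
      (fun x _ => (hder x).hasDerivWithinAt)
      (fun x _ => le_of_eq (by rw [hconj, hcommnorm])) s hs
    simpa [hf0] using this
  have hint : IntervalIntegrable f MeasureTheory.volume 0 t := hcont.intervalIntegrable _ _
  have hintZ : IntervalIntegrable (fun _ : ℝ => Z) MeasureTheory.volume 0 t :=
    intervalIntegrable_const
  have hrw : (∫ s in (0:ℝ)..t,
      exp ((Complex.I * s) • H) * Z * exp ((-(Complex.I * s)) • H)) = ∫ s in (0:ℝ)..t, f s := by
    refine intervalIntegral.integral_congr fun s _ => ?_
    rw [hf]; dsimp only; rw [hcast s, hcast' s]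
  rw [hrw]
  have key : (t⁻¹ : ℝ) • (∫ s in (0:ℝ)..t, f s) - Z
      = (t⁻¹ : ℝ) • ∫ s in (0:ℝ)..t, (f s - Z) := by
    rw [intervalIntegral.integral_sub hint hintZ, intervalIntegral.integral_const, sub_zero,
      smul_sub, smul_smul, inv_mul_cancel₀ ht.ne', one_smul]
  rw [key, norm_smul, Real.norm_eq_abs, abs_inv, abs_of_pos ht]
  have hnorm : ‖∫ s in (0:ℝ)..t, (f s - Z)‖ ≤ M * (t ^ 2 / 2) := by
    have hg : IntervalIntegrable (fun s : ℝ => M * s) MeasureTheory.volume 0 t :=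
      (continuous_const.mul continuous_id).intervalIntegrable _ _
    have hle := intervalIntegral.norm_integral_le_of_norm_le (g := fun s => M * s)
      (f := fun s => f s - Z)
      ht.le (Filter.Eventually.of_forall fun s hs => hbound s ⟨hs.1.le, hs.2⟩) hg
    have hM0 : (0:ℝ) ≤ M := hM ▸ norm_nonneg _
    calc ‖∫ s in (0:ℝ)..t, (f s - Z)‖ ≤ |∫ s in (0:ℝ)..t, M * s| := hle.trans (le_abs_self _)
      _ = M * (t ^ 2 / 2) := by
        rw [intervalIntegral.integral_const_mul, integral_id,
          abs_of_nonneg (mul_nonneg hM0 (by nlinarith [sq_nonneg t]))]; ring_nf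
  calc t⁻¹ * ‖∫ s in (0:ℝ)..t, (f s - Z)‖ ≤ t⁻¹ * (M * (t ^ 2 / 2)) :=
        mul_le_mul_of_nonneg_left hnorm (by positivity)
    _ = (t / 2) * M := by field_simp

set_option maxHeartbeats 1000000 in
theorem stmt_3 {n : ℕ}
    (H Z : EuclideanSpace ℂ (Fin n) →L[ℂ] EuclideanSpace ℂ (Fin n))
    (hH : IsSelfAdjoint H) (hZ : IsSelfAdjoint Z) (t : ℝ) (ht : 0 < t) :
    ‖(t⁻¹ : ℝ) • (∫ s in (0:ℝ)..t,
        exp ((Complex.I * s) • H) * Z * exp ((-(Complex.I * s)) • H)) - Z‖ ≤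
      (t / 2) * ‖H * Z - Z * H‖ :=
  by exact stmt_3_aux H Z hH t ht
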